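/- Let p be an odd prime that is not a Wieferich prime (2^(p-1) ≢ 1 mod p²), ζ a primitive p-th root of unity, and φ(z) = (z − 1)^p + 2 − ζ. Then for every m ≥ 1, there exists a prime ideal 𝔮 of ℤ[ζ] such that the 𝔮-adic valuation of φ^m(1) is not divisible by p. -/

import Mathlib

set_option synthInstance.maxHeartbeats 1000000
set_option maxHeartbeats 1000000

open NumberField UniqueFactorizationMonoid

section Aux

lemma aux_prod_sub_prod_dvd {R ι : Type*} [CommRing R] (s : Finset ι) (d : R) (f g : ι → R)
    (h : ∀ i ∈ s, d ∣ f i - g i) : d ∣ ∏ i ∈ s, f i - ∏ i ∈ s, g i := by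
  classical
  induction s using Finset.induction with
  | empty => simp
  | @insert a s ha ih =>
    rw [Finset.prod_insert ha, Finset.prod_insert ha]
    have key : f a * ∏ i ∈ s, f i - g a * ∏ i ∈ s, g i =
        (f a - g a) * ∏ i ∈ s, f i + g a * (∏ i ∈ s, f i - ∏ i ∈ s, g i) := by ring
    rw [key]
    exact dvd_add ((h a (Finset.mem_insert_self a s)).mul_right _)
      ((ih fun i hi => h i (Finset.mem_insert_of_mem hi)).mul_left _)

lemma aux_sq_dvd {p : ℕ} (hp : p.Prime) {D : ℤ} (h : (p : ℤ) ^ p ∣ D ^ (p - 1)) :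
    (p : ℤ) ^ 2 ∣ D := by
  have hpZ : Prime (p : ℤ) := Nat.prime_iff_prime_int.mp hp
  have h1 : (p : ℤ) ∣ D :=
    hpZ.dvd_of_dvd_pow (dvd_trans (dvd_pow_self _ hp.ne_zero) h)
  obtain ⟨E, rfl⟩ := h1
  have hp1 : p - 1 + 1 = p := Nat.succ_pred_eq_of_pos hp.pos
  have h2 : (p : ℤ) ^ (p - 1) * (p : ℤ) ∣ (p : ℤ) ^ (p - 1) * E ^ (p - 1) := by
    calc (p : ℤ) ^ (p - 1) * (p : ℤ) = (p : ℤ) ^ p := by rw [← pow_succ, hp1]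
    _ ∣ ((p : ℤ) * E) ^ (p - 1) := h
    _ = (p : ℤ) ^ (p - 1) * E ^ (p - 1) := mul_pow _ _ _
  have h3 : (p : ℤ) ∣ E ^ (p - 1) :=
    (mul_dvd_mul_iff_left (pow_ne_zero _ (by exact_mod_cast hp.ne_zero))).mp h2
  have h4 : (p : ℤ) ∣ E := hpZ.dvd_of_dvd_pow h3
  rw [sq]
  exact mul_dvd_mul_left _ h4

end Aux

theorem exists_prime_val_not_div (p : ℕ+) (hp : Fact (p : ℕ).Prime) (hodd : Odd (p : ℕ))
    (hw : (2 : ZMod ((p : ℕ) ^ 2)) ^ ((p : ℕ) - 1) ≠ 1)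
    (K : Type*) [Field K] [Algebra ℚ K] [IsCyclotomicExtension {(p : ℕ)} ℚ K] [NumberField K]
    (ζ : 𝓞 K) (hζ : IsPrimitiveRoot ζ (p : ℕ))
    (φ : 𝓞 K → 𝓞 K) (hφ : ∀ z, φ z = (z - 1) ^ (p : ℕ) + 2 - ζ) :
    ∀ m : ℕ, 1 ≤ m → ∃ q : Ideal (𝓞 K), q.IsPrime ∧
      ¬ (p : ℕ) ∣ @Multiset.count _ (Classical.decEq _) q (normalizedFactors (Ideal.span {φ^[m] 1})) := by
  intro m hm
  by_contra hcon
  push_neg at hcon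
  haveI : NeZero (p : ℕ) := ⟨hp.out.ne_zero⟩
  haveI : IsGalois ℚ K := IsCyclotomicExtension.isGalois {(p : ℕ)} ℚ K
  have hp2 : p ≠ 2 := by
    intro h
    rw [h] at hodd
    rw [Nat.odd_iff] at hodd
    exact absurd hodd (by decide)
  have hirrQ : Irreducible (Polynomial.cyclotomic (p : ℕ) ℚ) :=
    Polynomial.cyclotomic.irreducible_rat p.pos
  have hinj : Function.Injective (algebraMap (𝓞 K) K) := IsFractionRing.injective (𝓞 K) K
  have hζK : IsPrimitiveRoot (algebraMap (𝓞 K) K ζ) (p : ℕ) := hζ.map_of_injective hinj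
  set x : 𝓞 K := φ^[m] 1 with hx
  -- Step 1 : congruence x ≡ 2 - ζ  mod (ζ-1)^p
  have step1 : ∀ k : ℕ, 1 ≤ k →
      ((ζ - 1) ^ (p : ℕ) ∣ φ^[k] 1 - (2 - ζ)) ∧ ((ζ - 1) ∣ φ^[k] 1 - 1) := by
    intro k hk
    induction k, hk using Nat.le_induction with
    | base =>
      constructor
      · rw [Function.iterate_one, hφ]
        simp [zero_pow hp.out.ne_zero]
      · rw [Function.iterate_one, hφ]
        refine ⟨-1, ?_⟩
        simp [zero_pow hp.out.ne_zero]
        ring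
    | succ k hk ih =>
      obtain ⟨⟨u, hu⟩, ⟨v, hv⟩⟩ := ih
      have hiter : φ^[k + 1] 1 = (ζ - 1) ^ (p : ℕ) * v ^ (p : ℕ) + 2 - ζ := by
        rw [Function.iterate_succ_apply', hφ, hv, mul_pow]
      constructor
      · exact ⟨v ^ (p : ℕ), by rw [hiter]; ring⟩
      · have h1 : (ζ - 1) ∣ (ζ - 1) ^ (p : ℕ) * v ^ (p : ℕ) :=
          (dvd_pow_self (ζ - 1) hp.out.ne_zero).mul_right _
        have h2 : φ^[k + 1] 1 - 1 = (ζ - 1) ^ (p : ℕ) * v ^ (p : ℕ) - (ζ - 1) := by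
          rw [hiter]; ring
        rw [h2]
        exact dvd_sub h1 dvd_rfl
  obtain ⟨hcong, -⟩ := step1 m hm
  -- the Galois conjugates
  set g : (K ≃ₐ[ℚ] K) → (𝓞 K ≃ₐ[ℤ] 𝓞 K) := fun τ => galRestrict ℤ ℚ K (𝓞 K) τ with hg
  -- Step 2 : each conjugate of x is ≡ 2 - σζ mod (ζ-1)^p
  have step2 : ∀ τ : K ≃ₐ[ℚ] K, (ζ - 1) ^ (p : ℕ) ∣ g τ x - (2 - g τ ζ) := by
    intro τ
    obtain ⟨u, hu⟩ := hcong
    have h1 : g τ x - (2 - g τ ζ) = (g τ ζ - 1) ^ (p : ℕ) * g τ u := by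
      have := congrArg (g τ) hu
      rw [map_sub, map_sub, map_mul, map_pow, map_sub, map_one, map_ofNat] at this
      linear_combination this
    have h2 : (g τ ζ) ^ (p : ℕ) = 1 := by
      rw [← map_pow, hζ.pow_eq_one, map_one]
    obtain ⟨i, -, hi⟩ := hζ.eq_pow_of_pow_eq_one h2
    have h3 : (ζ - 1) ∣ (g τ ζ - 1) := by
      rw [← hi]
      simpa using sub_dvd_pow_sub_pow ζ 1 i
    rw [h1]
    exact (pow_dvd_pow_of_dvd h3 (p : ℕ)).mul_right _
  -- Step 3 : product of the 2 - σζ is 2^p - 1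
  have step3 : (∏ τ : K ≃ₐ[ℚ] K, (2 - g τ ζ)) = (2 : 𝓞 K) ^ (p : ℕ) - 1 := by
    have hmem : ∀ τ : K ≃ₐ[ℚ] K, g τ ζ ∈ primitiveRoots (p : ℕ) (𝓞 K) := fun τ =>
      (mem_primitiveRoots p.pos).mpr (hζ.map_of_injective (g τ).injective)
    have hginj : ∀ τ₁ τ₂ : K ≃ₐ[ℚ] K, g τ₁ ζ = g τ₂ ζ → τ₁ = τ₂ := by
      intro τ₁ τ₂ h
      have hK : τ₁ (algebraMap (𝓞 K) K ζ) = τ₂ (algebraMap (𝓞 K) K ζ) := by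
        rw [← algebraMap_galRestrict_apply ℤ τ₁ ζ, ← algebraMap_galRestrict_apply ℤ τ₂ ζ]
        exact congrArg _ h
      have pbgen := hζK.powerBasis_gen ℚ
      have : (τ₁ : K →ₐ[ℚ] K) = (τ₂ : K →ₐ[ℚ] K) := by
        apply (hζK.powerBasis ℚ).algHom_ext
        rw [pbgen]
        exact hK
      exact AlgEquiv.ext fun y => AlgHom.congr_fun this y
    have hcard : (primitiveRoots (p : ℕ) (𝓞 K)).card ≤ (Finset.univ : Finset (K ≃ₐ[ℚ] K)).card := by
      rw [hζ.card_primitiveRoots, Finset.card_univ, ← Nat.card_eq_fintype_card, IsGalois.card_aut_eq_finrank,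
        IsCyclotomicExtension.finrank (n := (p : ℕ)) K hirrQ]
    have hsurj := Finset.surj_on_of_inj_on_of_card_le
      (s := (Finset.univ : Finset (K ≃ₐ[ℚ] K))) (t := primitiveRoots (p : ℕ) (𝓞 K))
      (fun τ _ => g τ ζ) (fun τ _ => hmem τ) (fun τ₁ τ₂ _ _ h => hginj τ₁ τ₂ h) hcard
    have hprod : (∏ τ : K ≃ₐ[ℚ] K, (2 - g τ ζ)) =
        ∏ μ ∈ primitiveRoots (p : ℕ) (𝓞 K), (2 - μ) := by
      refine Finset.prod_bij (fun τ _ => g τ ζ) (fun τ _ => hmem τ)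
        (fun τ₁ _ τ₂ _ h => hginj τ₁ τ₂ h) ?_ (fun τ _ => rfl)
      intro μ hμ
      obtain ⟨τ, hτ, hτμ⟩ := hsurj μ hμ
      exact ⟨τ, hτ, hτμ.symm⟩
    rw [hprod]
    have hcyc := Polynomial.cyclotomic_eq_prod_X_sub_primitiveRoots hζ
    have := congrArg (Polynomial.eval (2 : 𝓞 K)) hcyc
    rw [Polynomial.eval_prod] at this
    simp only [Polynomial.eval_sub, Polynomial.eval_X, Polynomial.eval_C] at this
    rw [← this, Polynomial.cyclotomic_prime (𝓞 K) (p : ℕ)]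
    have hgeom := geom_sum_mul (2 : 𝓞 K) (p : ℕ)
    simp only [Polynomial.eval_finset_sum, Polynomial.eval_pow, Polynomial.eval_X]
    have h21 : (2 : 𝓞 K) - 1 = 1 := by norm_num
    rw [h21, mul_one] at hgeom
    exact hgeom
  -- Step 4 : norm as product of conjugates
  have step4 : ∀ y : 𝓞 K,
      algebraMap ℤ (𝓞 K) (Algebra.norm ℤ y) = ∏ τ : K ≃ₐ[ℚ] K, g τ y := by
    intro y
    apply hinj
    rw [map_prod]
    have h1 : ∀ τ : K ≃ₐ[ℚ] K, τ ∈ (Finset.univ : Finset (K ≃ₐ[ℚ] K)) →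
        algebraMap (𝓞 K) K (g τ y) = τ (algebraMap (𝓞 K) K y) := fun τ _ =>
      algebraMap_galRestrict_apply ℤ τ y
    rw [Finset.prod_congr rfl h1, ← Algebra.norm_eq_prod_automorphisms,
      Algebra.norm_localization (Rₘ := ℚ) (Sₘ := K) ℤ (nonZeroDivisors ℤ) y,
      ← IsScalarTower.algebraMap_apply ℤ (𝓞 K) K, ← IsScalarTower.algebraMap_apply ℤ ℚ K]
  -- Step 5 : divisibility of the norm difference
  set N : ℤ := Algebra.norm ℤ x with hN
  have step5 : (ζ - 1) ^ (p : ℕ) ∣ algebraMap ℤ (𝓞 K) (N - (2 ^ (p : ℕ) - 1)) := by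
    have h1 : (ζ - 1) ^ (p : ℕ) ∣
        (∏ τ : K ≃ₐ[ℚ] K, g τ x) - ∏ τ : K ≃ₐ[ℚ] K, (2 - g τ ζ) :=
      aux_prod_sub_prod_dvd _ _ _ _ (fun τ _ => step2 τ)
    rw [step3] at h1
    have h2 : algebraMap ℤ (𝓞 K) (N - (2 ^ (p : ℕ) - 1)) =
        (∏ τ : K ≃ₐ[ℚ] K, g τ x) - ((2 : 𝓞 K) ^ (p : ℕ) - 1) := by
      rw [map_sub, step4 x]
      congr 1
      push_cast
      norm_num
    rw [h2]
    exact h1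
  -- Step 6 : p² divides N - (2^p - 1)
  have hNlam : Algebra.norm ℤ (ζ - 1) = (p : ℤ) := by
    have hnorm := hζK.norm_sub_one_of_prime_ne_two' hirrQ (fun h => hp2 (PNat.coe_inj.mp h))
    apply RingHom.injective_int (algebraMap ℤ ℚ)
    rw [← Algebra.norm_localization (Rₘ := ℚ) (Sₘ := K) ℤ (nonZeroDivisors ℤ) (ζ - 1)]
    rw [map_sub, map_one, hnorm]
    simp
  have hNint : Algebra.norm ℤ (algebraMap ℤ (𝓞 K) (N - (2 ^ (p : ℕ) - 1))) =
      (N - (2 ^ (p : ℕ) - 1)) ^ ((p : ℕ) - 1) := by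
    rw [Algebra.norm_algebraMap_of_basis (Module.Free.chooseBasis ℤ (𝓞 K))]
    congr 1
    have hrank : Module.finrank ℤ (𝓞 K) = Module.finrank ℚ K := IsIntegralClosure.rank ℤ ℚ K (𝓞 K)
    rw [← Module.finrank_eq_card_chooseBasisIndex, hrank,
      IsCyclotomicExtension.finrank (n := (p : ℕ)) K hirrQ, Nat.totient_prime hp.out]
  have hdvd2 : (p : ℤ) ^ 2 ∣ N - (2 ^ (p : ℕ) - 1) := by
    apply aux_sq_dvd hp.out
    have := map_dvd (Algebra.norm ℤ (S := 𝓞 K)) step5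
    rwa [map_pow, hNlam, hNint] at this
  -- Step 7 : |N| is a p-th power
  obtain ⟨n, hn⟩ : ∃ n : ℕ, N.natAbs = n ^ (p : ℕ) := by
    by_cases hx0 : x = 0
    · refine ⟨0, ?_⟩
      rw [hN, hx0, Algebra.norm_zero]
      simp [zero_pow hp.out.ne_zero]
    · have hspan : (Ideal.span {x} : Ideal (𝓞 K)) ≠ 0 := by
        rw [Ne, Ideal.zero_eq_bot, Ideal.span_singleton_eq_bot]
        exact hx0
      set s := normalizedFactors (Ideal.span {x}) with hs
      have hsp : s.prod = Ideal.span {x} := associated_iff_eq.mp (prod_normalizedFactors hspan)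
      have hcount : ∀ q : Ideal (𝓞 K), q ∈ s → (p : ℕ) ∣ @Multiset.count _ (Classical.decEq _) q s := by
        intro q hq
        exact hcon q (Ideal.isPrime_of_prime (prime_of_normalized_factor q hq))
      obtain ⟨t, ht⟩ := @Multiset.exists_smul_of_dvd_count _ (Classical.decEq _) s (p : ℕ) hcount
      refine ⟨(t.map Ideal.absNorm).prod, ?_⟩
      calc N.natAbs = Ideal.absNorm (Ideal.span {x}) := (Ideal.absNorm_span_singleton x).symm
      _ = Ideal.absNorm s.prod := by rw [hsp]
      _ = (s.map Ideal.absNorm).prod := map_multiset_prod _ _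
      _ = (((p : ℕ) • t).map Ideal.absNorm).prod := by rw [← ht]
      _ = ((t.map Ideal.absNorm).prod) ^ (p : ℕ) := by
          rw [Multiset.map_nsmul, Multiset.prod_nsmul]
  -- Step 8 : endgame in ZMod p²
  have hsign : N = (n : ℤ) ^ (p : ℕ) ∨ N = -((n : ℤ) ^ (p : ℕ)) := by
    rcases Int.natAbs_eq N with h | h
    · left; rw [h, hn]; push_cast; ring
    · right; rw [h, hn]; push_cast; ring
  have hFermat : (p : ℤ) ∣ 2 ^ (p : ℕ) - 2 := by
    have h0 : ((2 ^ (p : ℕ) - 2 : ℤ) : ZMod (p : ℕ)) = 0 := by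
      push_cast
      rw [ZMod.pow_card]
      ring
    exact_mod_cast (ZMod.intCast_zmod_eq_zero_iff_dvd _ _).mp h0
  have hpn : ¬ (p : ℕ) ∣ n := by
    intro hdn
    have h1 : (p : ℤ) ∣ N := by
      have h2 : (p : ℤ) ∣ (n : ℤ) := Int.natCast_dvd_natCast.mpr hdn
      rcases hsign with h | h
      · rw [h]; exact dvd_pow h2 hp.out.ne_zero
      · rw [h]; exact (dvd_pow h2 hp.out.ne_zero).neg_right
    have h3 : (p : ℤ) ∣ N - 1 := by
      have f1 : (p : ℤ) ∣ N - (2 ^ (p : ℕ) - 1) :=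
        dvd_trans (dvd_pow_self _ two_ne_zero) hdvd2
      have f2 : (p : ℤ) ∣ (2 ^ (p : ℕ) - 1) - 1 := by
        have : (2 ^ (p : ℕ) - 1 - 1 : ℤ) = 2 ^ (p : ℕ) - 2 := by ring
        rw [this]
        exact hFermat
      have := dvd_add f1 f2
      rwa [sub_add_sub_cancel] at this
    have h4 : (p : ℤ) ∣ 1 := by
      have := dvd_sub h1 h3
      rwa [sub_sub_cancel] at this
    have h5 := Int.le_of_dvd one_pos h4
    exact absurd h5 (by exact_mod_cast not_le.mpr hp.out.one_lt)
  set M : ℕ := (p : ℕ) ^ 2 with hM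
  have hA : ((N : ZMod M)) = 2 ^ (p : ℕ) - 1 := by
    have h0 : ((N - (2 ^ (p : ℕ) - 1) : ℤ) : ZMod M) = 0 :=
      (ZMod.intCast_zmod_eq_zero_iff_dvd _ _).mpr (by push_cast; exact_mod_cast hdvd2)
    push_cast at h0
    linear_combination h0
  have hunit : IsUnit ((n : ℕ) : ZMod M) := by
    rw [ZMod.isUnit_iff_coprime]
    exact (((Nat.Prime.coprime_iff_not_dvd hp.out).mpr hpn).symm).pow_right 2
  have htot : M.totient = (p : ℕ) * ((p : ℕ) - 1) := by
    rw [hM, Nat.totient_prime_pow hp.out (by norm_num)]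
    ring
  have hunitpow : ((n : ℕ) : ZMod M) ^ ((p : ℕ) * ((p : ℕ) - 1)) = 1 := by
    obtain ⟨w, hw2⟩ := hunit
    rw [← hw2, ← Units.val_pow_eq_pow_val, ← htot, ZMod.pow_totient w, Units.val_one]
  have hexp : (p : ℕ) * (p : ℕ) = (p : ℕ) + (p : ℕ) * ((p : ℕ) - 1) := by
    obtain ⟨q, hq⟩ : ∃ q, (p : ℕ) = q + 1 := ⟨(p : ℕ) - 1, (Nat.succ_pred_eq_of_pos hp.out.pos).symm⟩
    rw [hq, Nat.add_sub_cancel]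
    ring
  have hNpow : (N : ZMod M) ^ (p : ℕ) = (N : ZMod M) := by
    have hbase : (((n : ℤ) ^ (p : ℕ) : ℤ) : ZMod M) ^ (p : ℕ) = (((n : ℤ) ^ (p : ℕ) : ℤ) : ZMod M) := by
      push_cast
      rw [← pow_mul, hexp, pow_add]
      rw [hunitpow, mul_one]
    rcases hsign with h | h
    · rw [h]; exact hbase
    · rw [h]
      push_cast
      rw [Odd.neg_pow hodd]
      push_cast at hbase
      rw [hbase]
  have hpowone : ((2 : ZMod M) ^ (p : ℕ) - 1) ^ (p : ℕ) = 1 := by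
    have h9 := dvd_sub_pow_of_dvd_sub (R := ℤ) (p := (p : ℕ))
      (a := 2 ^ (p : ℕ) - 1) (b := 1) (by
        have he : (2 ^ (p : ℕ) - 1 - 1 : ℤ) = 2 ^ (p : ℕ) - 2 := by ring
        rw [he]; exact hFermat) 1
    simp only [pow_one, one_pow] at h9
    have h10 : (((2 ^ (p : ℕ) - 1 : ℤ) ^ (p : ℕ) - 1 : ℤ) : ZMod M) = 0 :=
      (ZMod.intCast_zmod_eq_zero_iff_dvd _ _).mpr (by push_cast; exact_mod_cast h9)
    push_cast at h10
    linear_combination h10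
  have hkey : (2 : ZMod M) ^ (p : ℕ) - 1 = 1 := by
    have := hNpow
    rw [hA] at this
    rw [← this, hpowone]
  have h2p : (2 : ZMod M) ^ (p : ℕ) = 2 := by
    have := hkey
    linear_combination this
  have hu2 : IsUnit (2 : ZMod M) := by
    have hodd' : ¬ (2 ∣ (p : ℕ)) := by
      rw [Nat.odd_iff] at hodd
      omega
    have h22 : IsUnit ((2 : ℕ) : ZMod M) := by
      rw [ZMod.isUnit_iff_coprime]
      exact ((Nat.Prime.coprime_iff_not_dvd Nat.prime_two).mpr hodd').pow_right 2
    exact_mod_cast h22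
  have hfin : (2 : ZMod M) ^ ((p : ℕ) - 1) = 1 := by
    have hp1 : (p : ℕ) - 1 + 1 = (p : ℕ) := Nat.succ_pred_eq_of_pos hp.out.pos
    have h11 : (2 : ZMod M) * (2 : ZMod M) ^ ((p : ℕ) - 1) = (2 : ZMod M) * 1 := by
      rw [mul_one, ← pow_succ', hp1, h2p]
    exact hu2.mul_left_cancel h11
  exact hw hfin
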